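/- Let L be a relatively complemented lattice and let a, b ∈ L. Then the following are equivalent: (a) a is subperspective to b (there exists x with a ∧ x ≤ b ∧ x and a ∨ x ≤ b ∨ x); (b) there exists y ≤ b with a ∼ y; (c) there exists x ≥ a with x ∼ b. -/
import Mathlib


theorem stmt19 (L : Type*) [Lattice L]
    (hrc : ∀ u v a : L, u ≤ a → a ≤ v → ∃ x : L, a ⊓ x = u ∧ a ⊔ x = v)
    (a b : L) :
    ((∃ x : L, a ⊓ x ≤ b ⊓ x ∧ a ⊔ x ≤ b ⊔ x) ↔
        (∃ y : L, y ≤ b ∧ ∃ c : L, a ⊓ c = y ⊓ c ∧ a ⊔ c = y ⊔ c)) ∧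
      ((∃ x : L, a ⊓ x ≤ b ⊓ x ∧ a ⊔ x ≤ b ⊔ x) ↔
        (∃ x : L, a ≤ x ∧ ∃ c : L, x ⊓ c = b ⊓ c ∧ x ⊔ c = b ⊔ c)) := by
  constructor
  · constructor
    · rintro ⟨x, h1, h2⟩
      -- c : relative complement of a ⊔ x in [x, b ⊔ x]
      obtain ⟨c, hc1, hc2⟩ := hrc x (b ⊔ x) (a ⊔ x) le_sup_right h2
      have hxc : x ≤ c := hc1 ▸ inf_le_right
      have hac : a ⊓ c = a ⊓ x := by
        apply le_antisymm
        · have hle : a ⊓ c ≤ (a ⊔ x) ⊓ c :=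
            inf_le_inf_right c le_sup_left
          exact le_inf inf_le_left (hle.trans hc1.le)
        · exact le_inf inf_le_left (inf_le_right.trans hxc)
      have hasc : a ⊔ c = b ⊔ x := by
        rw [← hc2]
        apply le_antisymm
        · exact sup_le (le_sup_left.trans (sup_le_sup_right le_sup_left c)) le_sup_right
        · exact sup_le (sup_le le_sup_left (hxc.trans le_sup_right)) le_sup_right
      have hbsc : b ⊔ c = b ⊔ x := by
        apply le_antisymm
        · exact sup_le le_sup_left (le_sup_right.trans hc2.le)
        · exact sup_le le_sup_left (hxc.trans le_sup_right)
      have hinf : a ⊓ c ≤ b ⊓ c := by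
        rw [hac]
        exact h1.trans (inf_le_inf_left b hxc)
      -- y : relative complement of b ⊓ c in [a ⊓ c, b]
      obtain ⟨y, hy1, hy2⟩ := hrc (a ⊓ c) b (b ⊓ c) hinf inf_le_left
      have hyb : y ≤ b := le_sup_right.trans hy2.le
      refine ⟨y, hyb, c, ?_, ?_⟩
      · apply le_antisymm
        · exact le_inf (hy1 ▸ inf_le_right) inf_le_right
        · have : y ⊓ c ≤ b ⊓ c ⊓ y :=
            le_inf (le_inf (inf_le_left.trans hyb) inf_le_right) inf_le_left
          exact this.trans hy1.le
      · rw [hasc, ← hbsc, ← hy2]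
        apply le_antisymm
        · exact sup_le (sup_le (inf_le_right.trans le_sup_right) le_sup_left) le_sup_right
        · exact sup_le (le_sup_right.trans le_sup_left) le_sup_right
    · rintro ⟨y, hyb, c, h1, h2⟩
      exact ⟨c, h1.le.trans (inf_le_inf_right c hyb), h2.le.trans (sup_le_sup_right hyb c)⟩
  · constructor
    · rintro ⟨x, h1, h2⟩
      -- c : relative complement of b ⊓ x in [a ⊓ x, x]
      obtain ⟨c, hc1, hc2⟩ := hrc (a ⊓ x) x (b ⊓ x) h1 inf_le_right
      have hcx : c ≤ x := hc2 ▸ le_sup_right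
      have haxc : a ⊓ x ≤ c := hc1 ▸ inf_le_right
      have hbc : b ⊓ c = a ⊓ x := by
        apply le_antisymm
        · have : b ⊓ c ≤ b ⊓ x ⊓ c :=
            le_inf (le_inf inf_le_left (inf_le_right.trans hcx)) inf_le_right
          exact this.trans hc1.le
        · exact le_inf (h1.trans inf_le_left) haxc
      have hac : a ⊓ c = a ⊓ x :=
        le_antisymm (inf_le_inf_left a hcx) (le_inf inf_le_left haxc)
      have hbsc : b ⊔ c = b ⊔ x := by
        apply le_antisymm
        · exact sup_le le_sup_left (hcx.trans le_sup_right)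
        · rw [← hc2]
          exact sup_le le_sup_left (sup_le (inf_le_left.trans le_sup_left) le_sup_right)
      have hsup : a ⊔ c ≤ b ⊔ c := by
        rw [hbsc]
        exact sup_le (le_sup_left.trans h2) (hcx.trans le_sup_right)
      -- z : relative complement of a ⊔ c in [a, b ⊔ c]
      obtain ⟨z, hz1, hz2⟩ := hrc a (b ⊔ c) (a ⊔ c) le_sup_left hsup
      have haz : a ≤ z := hz1 ▸ inf_le_right
      refine ⟨z, haz, c, ?_, ?_⟩
      · apply le_antisymm
        · have hza : z ⊓ c ≤ a :=
            (le_inf (inf_le_right.trans le_sup_right) inf_le_left).trans hz1.le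
          exact (le_inf hza inf_le_right).trans (hac.trans hbc.symm).le
        · rw [hbc, ← hac]
          exact le_inf (inf_le_left.trans haz) inf_le_right
      · rw [← hz2]
        apply le_antisymm
        · exact sup_le le_sup_right (le_sup_right.trans le_sup_left)
        · exact sup_le (sup_le (haz.trans le_sup_left) le_sup_right) le_sup_left
    · rintro ⟨z, haz, c, h1, h2⟩
      exact ⟨c, h1 ▸ inf_le_inf_right c haz, h2 ▸ sup_le_sup_right haz c⟩
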